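/- For every λ, k, n ≥ 1 with n ≥ 3λ·2^k, there exists a directed graph G on O(n) vertices with a source s such that every (λ,k)-FT-BFP of G contains at least 2^k·λ·n/3 edges. Concretely, G consists of λ vertex-disjoint complete binary trees of height k with roots r_1,…,r_λ, a source s with an edge to each r_i, and a set Y of at least n/3 additional vertices such that every leaf of every tree has an edge to every vertex of Y; then every (λ,k)-FT-BFP of G must contain all edges from leaves to Y. -/

import Mathlib

open Finset

/-- `p` is a nonempty directed path/walk (as a list of edges) from `s` to `t`
using only edges of `G`. -/
def IsPath {V : Type*} (G : Finset (V × V)) (s t : V) (p : List (V × V)) : Prop :=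
  p ≠ [] ∧ (∀ e ∈ p, e ∈ G) ∧ List.Chain' (fun e f => e.2 = f.1) p ∧
    p.head?.map Prod.fst = some s ∧ p.getLast?.map Prod.snd = some t

/-- `G` contains `r` pairwise edge-disjoint paths from `s` to `t` (unit capacities). -/
def EDP {V : Type*} (G : Finset (V × V)) (s t : V) (r : ℕ) : Prop :=
  ∃ ps : Fin r → List (V × V), (∀ i, IsPath G s t (ps i)) ∧
    ∀ i j, i ≠ j → ∀ e, e ∈ ps i → e ∉ ps j

/-- Max-flow with unit capacities: the maximum number of edge-disjoint `s`-`t` paths. -/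
noncomputable def maxFlow {V : Type*} (G : Finset (V × V)) (s t : V) : ℕ :=
  sSup {r | EDP G s t r}

/-- Directed reachability in the edge set `G`. -/
def Reach {V : Type*} (G : Finset (V × V)) (s t : V) : Prop :=
  Relation.ReflTransGen (fun a b => (a, b) ∈ G) s t

def inEdges {V : Type*} [DecidableEq V] (G : Finset (V × V)) (v : V) : Finset (V × V) :=
  G.filter fun e => e.2 = v

def outDeg {V : Type*} [DecidableEq V] (G : Finset (V × V)) (v : V) : ℕ :=
  (G.filter fun e => e.1 = v).card

/-- `H` is a `(lam, k)` fault-tolerant bounded-flow-preserver of `G` w.r.t. source `s`: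
for every set `F` of at most `k` failed edges and every vertex `t`, the `s`-`t` max-flow
of `H \ F` equals that of `G \ F` whenever the latter is at most `lam`, and is at least
`lam` otherwise. -/
def IsFTBFP {V : Type*} [DecidableEq V] (G H : Finset (V × V)) (s : V) (lam k : ℕ) : Prop :=
  H ⊆ G ∧ ∀ F : Finset (V × V), F.card ≤ k → ∀ t : V,
    (maxFlow (G \ F) s t ≤ lam → maxFlow (H \ F) s t = maxFlow (G \ F) s t) ∧
    (lam < maxFlow (G \ F) s t → lam ≤ maxFlow (H \ F) s t)

/-- `H` is a `j`-fault-tolerant reachability subgraph of `G` w.r.t. source `s`. -/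
def IsFTRS {V : Type*} [DecidableEq V] (G H : Finset (V × V)) (s : V) (j : ℕ) : Prop :=
  H ⊆ G ∧ ∀ F : Finset (V × V), F.card ≤ j → ∀ t : V,
    (Reach (H \ F) s t ↔ Reach (G \ F) s t)

def IsCut {V : Type*} (A : Finset V) (s t : V) : Prop := s ∈ A ∧ t ∉ A

/-- Number of edges of `G` from `A` to its complement. -/
def cutVal {V : Type*} [DecidableEq V] (G : Finset (V × V)) (A : Finset V) : ℕ :=
  (G.filter fun e => e.1 ∈ A ∧ e.2 ∉ A).card

def IsMinCut {V : Type*} [DecidableEq V] (G : Finset (V × V)) (s t : V) (A : Finset V) : Prop :=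
  IsCut A s t ∧ ∀ B : Finset V, IsCut B s t → cutVal G A ≤ cutVal G B

def IsCutS {V : Type*} (S : Finset V) (t : V) (A : Finset V) : Prop := S ⊆ A ∧ t ∉ A

def IsMinCutS {V : Type*} [DecidableEq V] (G : Finset (V × V)) (S : Finset V) (t : V)
    (A : Finset V) : Prop :=
  IsCutS S t A ∧ ∀ B : Finset V, IsCutS S t B → cutVal G A ≤ cutVal G B

/-- Farthest min-cut: the min-cut whose source side contains the source side of
every min-cut. -/
def IsFMC {V : Type*} [DecidableEq V] (G : Finset (V × V)) (S : Finset V) (t : V)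
    (A : Finset V) : Prop :=
  IsMinCutS G S t A ∧ ∀ B : Finset V, IsMinCutS G S t B → B ⊆ A

/-- Vertices outside `A` with an in-edge from `A`. -/
def outSet {V : Type*} [DecidableEq V] (G : Finset (V × V)) (A : Finset V) : Finset V :=
  (G.filter fun e => e.1 ∈ A ∧ e.2 ∉ A).image Prod.snd

set_option linter.unusedSectionVars false

namespace Stmt6

variable {V : Type*} [DecidableEq V]

lemma edp_zero (G : Finset (V × V)) (s t : V) : EDP G s t 0 :=
  ⟨Fin.elim0, fun i => i.elim0, fun i => i.elim0⟩

lemma edp_le_outdeg {G : Finset (V × V)} {s t : V} {r : ℕ} (h : EDP G s t r) :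
    r ≤ (G.filter fun e => e.1 = s).card := by
  obtain ⟨ps, hps, hdis⟩ := h
  have hne : ∀ i, ps i ≠ [] := fun i => (hps i).1
  have hmemf : ∀ i, (ps i).head (hne i) ∈ G.filter fun e => e.1 = s := by
    intro i
    obtain ⟨hn, hG, -, hh, -⟩ := hps i
    have hm : (ps i).head (hne i) ∈ ps i := List.head_mem _
    refine mem_filter.mpr ⟨hG _ hm, ?_⟩
    rw [List.head?_eq_head (hne i)] at hh
    simpa using hh
  let g : Fin r → {e // e ∈ G.filter fun e => e.1 = s} :=
    fun i => ⟨(ps i).head (hne i), hmemf i⟩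
  have hinj : Function.Injective g := by
    intro a b hab
    by_contra hab'
    have h1 : (ps a).head (hne a) ∈ ps a := List.head_mem _
    have h2 := hdis a b hab' _ h1
    have : (ps a).head (hne a) = (ps b).head (hne b) := congrArg Subtype.val hab
    rw [this] at h2
    exact h2 (List.head_mem _)
  have := Fintype.card_le_of_injective g hinj
  simpa using this

lemma bddAbove_edp (G : Finset (V × V)) (s t : V) : BddAbove {r | EDP G s t r} :=
  ⟨_, fun _ hr => edp_le_outdeg hr⟩

lemma maxFlow_le_outdeg (G : Finset (V × V)) (s t : V) :
    maxFlow G s t ≤ (G.filter fun e => e.1 = s).card :=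
  csSup_le ⟨0, by exact edp_zero G s t⟩ fun _ hr => edp_le_outdeg hr

lemma le_maxFlow {G : Finset (V × V)} {s t : V} {r : ℕ} (h : EDP G s t r) :
    r ≤ maxFlow G s t :=
  le_csSup (bddAbove_edp G s t) h

lemma edp_maxFlow (G : Finset (V × V)) (s t : V) : EDP G s t (maxFlow G s t) :=
  Nat.sSup_mem ⟨0, by exact edp_zero G s t⟩ (bddAbove_edp G s t)

end Stmt6
section Construction

variable (lam k n : ℕ)

abbrev Vx : Type := Unit ⊕ (Fin lam × Fin (2 ^ (k + 1))) ⊕ Fin n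

variable {lam k n}

def src : Vx lam k n := Sum.inl ()

def node (i : Fin lam) (v : ℕ) : Vx lam k n :=
  Sum.inr (Sum.inl (i, ⟨v % 2 ^ (k + 1), Nat.mod_lt _ (by positivity)⟩))

def yv (y : Fin n) : Vx lam k n := Sum.inr (Sum.inr y)

def edgeB : Vx lam k n → Vx lam k n → Bool
  | Sum.inl _, Sum.inr (Sum.inl (_, v)) => decide ((v : ℕ) = 1)
  | Sum.inr (Sum.inl (i, v)), Sum.inr (Sum.inl (i', w)) =>
      decide (i = i' ∧ 1 ≤ (v : ℕ) ∧ (v : ℕ) < 2 ^ k ∧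
        ((w : ℕ) = 2 * (v : ℕ) ∨ (w : ℕ) = 2 * (v : ℕ) + 1))
  | Sum.inr (Sum.inl (_, v)), Sum.inr (Sum.inr _) => decide (2 ^ k ≤ (v : ℕ))
  | _, _ => false

variable (lam k n) in
def Gr : Finset (Vx lam k n × Vx lam k n) := univ.filter fun e => edgeB e.1 e.2

lemma mem_Gr {e : Vx lam k n × Vx lam k n} : e ∈ Gr lam k n ↔ edgeB e.1 e.2 = true := by
  simp [Gr]

lemma node_inj {i i' : Fin lam} {v w : ℕ} (hv : v < 2 ^ (k + 1)) (hw : w < 2 ^ (k + 1))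
    (h : (node i v : Vx lam k n) = node i' w) : i = i' ∧ v = w := by
  simp only [node, Sum.inr.injEq, Sum.inl.injEq, Prod.mk.injEq, Fin.mk.injEq] at h
  rw [Nat.mod_eq_of_lt hv, Nat.mod_eq_of_lt hw] at h
  exact h

lemma node_val {i : Fin lam} {v : ℕ} (hv : v < 2 ^ (k + 1)) :
    (node i v : Vx lam k n) = Sum.inr (Sum.inl (i, ⟨v, hv⟩)) := by
  simp [node, Nat.mod_eq_of_lt hv]

/-- Edges out of `src` go to roots. -/
lemma src_edge {e : Vx lam k n × Vx lam k n} (he : e ∈ Gr lam k n) (h1 : e.1 = src) :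
    ∃ g : Fin lam, e = (src, node g 1) := by
  rw [mem_Gr] at he
  obtain ⟨a, b⟩ := e
  cases h1
  rcases b with _ | b
  · simp [edgeB, src] at he
  rcases b with ⟨i, v⟩ | y
  · refine ⟨i, ?_⟩
    simp only [edgeB, decide_eq_true_eq, src] at he
    have h1B : (1 : ℕ) < 2 ^ (k + 1) := by
      have : (2:ℕ)^1 ≤ 2 ^ (k+1) := Nat.pow_le_pow_right (by norm_num) (by omega)
      omega
    have hv : v = ⟨1, h1B⟩ := Fin.ext he
    rw [node_val h1B, hv]; rfl
  · simp [edgeB, src] at he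

end Construction
section Anc

/-- ancestors of `L` in heap numbering: `anc k L j` is the depth-`j` ancestor. -/
def anc (k L j : ℕ) : ℕ := L / 2 ^ (k - j)

variable {k L : ℕ} (hL1 : 2 ^ k ≤ L) (hL2 : L < 2 ^ (k + 1))

include hL1 hL2 in
lemma anc_lb {j : ℕ} (hj : j ≤ k) : 2 ^ j ≤ anc k L j := by
  rw [anc, Nat.le_div_iff_mul_le (Nat.pow_pos (by norm_num))]
  calc 2 ^ j * 2 ^ (k - j) = 2 ^ k := by rw [← pow_add]; congr 1; omega
    _ ≤ L := hL1

include hL2 in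
lemma anc_ub {j : ℕ} (hj : j ≤ k) : anc k L j < 2 ^ (j + 1) := by
  rw [anc, Nat.div_lt_iff_lt_mul (Nat.pow_pos (by norm_num))]
  calc L < 2 ^ (k + 1) := hL2
    _ = 2 ^ (j + 1) * 2 ^ (k - j) := by rw [← pow_add]; congr 1; omega

include hL1 hL2 in
lemma anc_zero : anc k L 0 = 1 := by
  have h1 := anc_lb hL1 hL2 (Nat.zero_le k)
  have h2 := anc_ub hL2 (Nat.zero_le k)
  omega

lemma anc_k : anc k L k = L := by simp [anc]

lemma anc_div {j : ℕ} (hj : j < k) : anc k L j = anc k L (j + 1) / 2 := by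
  rw [anc, anc, Nat.div_div_eq_div_mul, ← pow_succ]
  congr 2
  omega

lemma anc_succ {j : ℕ} (hj : j < k) :
    anc k L (j + 1) = 2 * anc k L j ∨ anc k L (j + 1) = 2 * anc k L j + 1 := by
  rw [anc_div hj]
  omega

/-- the sibling of the depth-`(j+1)` ancestor. -/
def sib (k L j : ℕ) : ℕ :=
  if anc k L (j + 1) = 2 * anc k L j then 2 * anc k L j + 1 else 2 * anc k L j

lemma sib_ne {j : ℕ} (hj : j < k) : sib k L j ≠ anc k L (j + 1) := by
  have := anc_succ (L := L) hj
  rw [sib]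
  split <;> omega

lemma sib_cases {j : ℕ} : sib k L j = 2 * anc k L j ∨ sib k L j = 2 * anc k L j + 1 := by
  rw [sib]; split <;> omega

lemma pow_range_eq {a p q : ℕ} (h1 : 2 ^ p ≤ a) (h2 : a < 2 ^ (p + 1))
    (h3 : 2 ^ q ≤ a) (h4 : a < 2 ^ (q + 1)) : p = q := by
  by_contra hne
  rcases Nat.lt_or_ge p q with h | h
  · have : (2:ℕ) ^ (p + 1) ≤ 2 ^ q := Nat.pow_le_pow_right (by norm_num) (by omega)
    omega
  · have : (2:ℕ) ^ (q + 1) ≤ 2 ^ p := Nat.pow_le_pow_right (by norm_num) (by omega)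
    omega

include hL1 hL2 in
lemma sib_lb {j : ℕ} (hj : j < k) : 2 ^ (j + 1) ≤ sib k L j := by
  have h1 := anc_lb hL1 hL2 (le_of_lt hj)
  have := sib_cases (k := k) (L := L) (j := j)
  rw [pow_succ] at *
  omega

include hL1 hL2 in
lemma sib_ub {j : ℕ} (hj : j < k) : sib k L j < 2 ^ (j + 1 + 1) := by
  have h1 := anc_ub hL2 (le_of_lt hj)
  have := sib_cases (k := k) (L := L) (j := j)
  rw [pow_succ 2 (j+1)] at *
  omega

end Anc
section Paths

variable {lam k n : ℕ}

def pathL (i : Fin lam) (f : ℕ → ℕ) (y : Fin n) (k : ℕ) : List (Vx lam k n × Vx lam k n) :=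
  ((src, node i (f 0)) :: (List.range k).map fun j => (node i (f j), node i (f (j + 1)))) ++
    [(node i (f k), yv y)]

lemma mem_pathL {i : Fin lam} {f : ℕ → ℕ} {y : Fin n} {e : Vx lam k n × Vx lam k n} :
    e ∈ pathL i f y k ↔ e = (src, node i (f 0)) ∨
      (∃ j < k, e = (node i (f j), node i (f (j + 1)))) ∨ e = (node i (f k), yv y) := by
  simp [pathL, or_assoc, eq_comm]

lemma pathL_ne_nil {i : Fin lam} {f : ℕ → ℕ} {y : Fin n} : pathL (n := n) i f y k ≠ [] := by
  simp [pathL]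

lemma pathL_head {i : Fin lam} {f : ℕ → ℕ} {y : Fin n} :
    (pathL (n := n) i f y k).head? = some (src, node i (f 0)) := by
  simp [pathL]

lemma pathL_last {i : Fin lam} {f : ℕ → ℕ} {y : Fin n} :
    (pathL (n := n) i f y k).getLast? = some (node i (f k), yv y) := by
  rw [pathL, List.getLast?_concat]

lemma pathL_chain {i : Fin lam} {f : ℕ → ℕ} {y : Fin n} :
    List.Chain' (fun e f => e.2 = f.1) (pathL (n := n) i f y k) := by
  rw [pathL]; simp only [List.Chain']; rw [List.isChain_append]
  refine ⟨?_, List.isChain_singleton _, ?_⟩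
  · rw [List.isChain_cons]
    constructor
    · intro z hz
      cases k with
      | zero => simp at hz
      | succ m =>
        rw [List.range_succ_eq_map] at hz
        simp only [List.map_cons, List.head?_cons, Option.mem_def, Option.some.injEq] at hz
        rw [← hz]
    · rw [List.isChain_map]
      cases k with
      | zero => simp
      | succ m =>
        rw [List.isChain_range_succ]
        intro j hj
        rfl
  · intro x hx z hz
    simp only [List.head?_cons, Option.mem_def, Option.some.injEq] at hz
    subst hz
    cases k with
    | zero => simp at hx; rw [← hx]
    | succ m =>
      rw [List.range_succ, List.map_append, List.map_singleton, ← List.cons_append,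
        List.getLast?_concat] at hx
      simp only [Option.mem_def, Option.some.injEq] at hx
      rw [← hx]

lemma isPath_pathL {G : Finset (Vx lam k n × Vx lam k n)} {i : Fin lam} {f : ℕ → ℕ} {y : Fin n}
    (hG : ∀ e ∈ pathL i f y k, e ∈ G) : IsPath G src (yv y) (pathL i f y k) :=
  ⟨pathL_ne_nil, hG, pathL_chain, by rw [pathL_head]; rfl, by rw [pathL_last]; rfl⟩

/-- a "descending" labelling: conditions for a root-to-leaf walk. -/
structure Desc (k : ℕ) (f : ℕ → ℕ) : Prop where
  zero : f 0 = 1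
  succ : ∀ j < k, f (j + 1) = 2 * f j ∨ f (j + 1) = 2 * f j + 1

lemma Desc.bounds {k : ℕ} {f : ℕ → ℕ} (h : Desc k f) :
    ∀ j ≤ k, 2 ^ j ≤ f j ∧ f j < 2 ^ (j + 1) := by
  intro j
  induction j with
  | zero => intro _; simp [h.zero]
  | succ m ih =>
    intro hm
    have h1 := ih (by omega)
    have h2 := h.succ m (by omega)
    rw [pow_succ 2 (m+1)] at *
    rw [pow_succ 2 m] at *
    omega

lemma desc_anc {L : ℕ} (hL1 : 2 ^ k ≤ L) (hL2 : L < 2 ^ (k + 1)) : Desc k (anc k L) :=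
  ⟨anc_zero hL1 hL2, fun j hj => anc_succ hj⟩

lemma desc_pow : Desc k (fun j => 2 ^ j) := ⟨rfl, fun j _ => Or.inl (by rw [pow_succ]; ring)⟩

lemma one_lt_B : (1:ℕ) < 2 ^ (k + 1) := by
  calc (1:ℕ) < 2 ^ 1 := by norm_num
    _ ≤ 2 ^ (k+1) := Nat.pow_le_pow_right (by norm_num) (by omega)

/-- all edges of a descending path lie in `Gr`. -/
lemma pathL_sub_Gr {i : Fin lam} {f : ℕ → ℕ} {y : Fin n} (hf : Desc k f) :
    ∀ e ∈ pathL i f y k, e ∈ Gr lam k n := by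
  intro e he
  have hBpos : (0:ℕ) < 2 ^ (k+1) := by positivity
  have hb := hf.bounds
  rw [mem_pathL] at he
  rcases he with rfl | ⟨j, hj, rfl⟩ | rfl
  · rw [mem_Gr, hf.zero, node_val one_lt_B]
    exact decide_eq_true (show (((⟨1, one_lt_B⟩ : Fin (2 ^ (k + 1))) : ℕ) = 1) from rfl)
  · have hj1 : f j < 2 ^ (k + 1) :=
      lt_of_lt_of_le (hb j (by omega)).2 (Nat.pow_le_pow_right (by norm_num) (by omega))
    have hj2 : f (j + 1) < 2 ^ (k + 1) :=
      lt_of_lt_of_le (hb (j + 1) (by omega)).2 (Nat.pow_le_pow_right (by norm_num) (by omega))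
    have hjk : f j < 2 ^ k :=
      lt_of_lt_of_le (hb j (by omega)).2 (Nat.pow_le_pow_right (by norm_num) (by omega))
    have h1 : 1 ≤ f j := le_trans Nat.one_le_two_pow (hb j (by omega)).1
    rw [mem_Gr, node_val hj1, node_val hj2]
    exact decide_eq_true ⟨rfl, h1, hjk, hf.succ j hj⟩
  · have hk1 : f k < 2 ^ (k + 1) := (hb k le_rfl).2
    rw [mem_Gr, node_val hk1]
    exact decide_eq_true (hb k le_rfl).1

end Paths
section Flow

variable {lam k n : ℕ}

variable (lam n) in
/-- the fault set isolating leaf `L` in tree `i`. -/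
def FS (i : Fin lam) (L : ℕ) : Finset (Vx lam k n × Vx lam k n) :=
  (Finset.range k).image fun j => (node i (anc k L j), node i (sib k L j))

lemma FS_card {i : Fin lam} {L : ℕ} : (FS lam n (k := k) i L).card ≤ k :=
  le_trans Finset.card_image_le (by simp)

lemma mem_FS {i : Fin lam} {L : ℕ} {e : Vx lam k n × Vx lam k n} :
    e ∈ FS lam n i L ↔ ∃ j < k, e = (node i (anc k L j), node i (sib k L j)) := by
  simp [FS, eq_comm]

lemma src_ne_node {i : Fin lam} {v : ℕ} : (src : Vx lam k n) ≠ node i v := by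
  simp [src, node]

lemma yv_ne_node {i : Fin lam} {v : ℕ} {y : Fin n} : (yv y : Vx lam k n) ≠ node i v := by
  simp [yv, node]

lemma node_ne_of_ne {i i' : Fin lam} {v w : ℕ} (h : i ≠ i') :
    (node i v : Vx lam k n) ≠ node i' w := by
  simp only [node, ne_eq, Sum.inr.injEq, Sum.inl.injEq, Prod.mk.injEq, not_and]
  exact fun hii => absurd hii h

/-- for a tree `i' ≠ i`, path edges avoid `FS i L`. -/
lemma pathL_disj_FS_ne {i i' : Fin lam} {L : ℕ} {f : ℕ → ℕ} {y : Fin n} (hne : i' ≠ i) :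
    ∀ e ∈ pathL (n := n) i' f y k, e ∉ FS lam n i L := by
  intro e he hF
  rw [mem_FS] at hF
  obtain ⟨j, hj, rfl⟩ := hF
  rw [mem_pathL] at he
  rcases he with he | ⟨j', hj', he⟩ | he
  · exact src_ne_node (congrArg Prod.fst he).symm
  · exact node_ne_of_ne hne (congrArg Prod.fst he).symm
  · exact node_ne_of_ne hne (congrArg Prod.fst he).symm

/-- the special path in tree `i` avoids `FS i L`. -/
lemma pathL_disj_FS_self {i : Fin lam} {L : ℕ} {y : Fin n}
    (hL1 : 2 ^ k ≤ L) (hL2 : L < 2 ^ (k + 1)) :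
    ∀ e ∈ pathL (n := n) i (anc k L) y k, e ∉ FS lam n i L := by
  intro e he hF
  rw [mem_FS] at hF
  obtain ⟨j, hj, rfl⟩ := hF
  rw [mem_pathL] at he
  have hanc := (desc_anc hL1 hL2).bounds
  have hsibub := sib_ub hL1 hL2 hj
  have hsiblb := sib_lb hL1 hL2 hj
  have hsibB : sib k L j < 2 ^ (k + 1) :=
    lt_of_lt_of_le hsibub (Nat.pow_le_pow_right (by norm_num) (by omega))
  rcases he with he | ⟨j', hj', he⟩ | he
  · exact src_ne_node (congrArg Prod.fst he).symm
  · -- snd components : anc k L (j' + 1) = sib k L j, impossible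
    have h2 := congrArg Prod.snd he
    simp only at h2
    have hancB : anc k L (j' + 1) < 2 ^ (k + 1) :=
      lt_of_lt_of_le (anc_ub hL2 (by omega)) (Nat.pow_le_pow_right (by norm_num) (by omega))
    have heq := (node_inj hsibB hancB h2).2
    have hjj : j' + 1 = j + 1 :=
      pow_range_eq (heq ▸ anc_lb hL1 hL2 (by omega)) (heq ▸ anc_ub hL2 (by omega)) hsiblb hsibub
    have : j' = j := by omega
    subst this
    exact sib_ne hj heq
  · have h2 := congrArg Prod.snd he
    simp only at h2
    exact yv_ne_node h2.symm

lemma edp_Gr_sdiff_FS {i : Fin lam} {L : ℕ} (y : Fin n)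
    (hL1 : 2 ^ k ≤ L) (hL2 : L < 2 ^ (k + 1)) :
    EDP (Gr lam k n \ FS lam n i L) src (yv y) lam := by
  classical
  refine ⟨fun i' => pathL i' (fun j => if i' = i then anc k L j else 2 ^ j) y k, ?_, ?_⟩
  · intro i'
    apply isPath_pathL
    intro e he
    rw [Finset.mem_sdiff]
    by_cases hii : i' = i
    · subst hii
      simp only [if_pos rfl] at he ⊢
      exact ⟨pathL_sub_Gr (desc_anc hL1 hL2) e he, pathL_disj_FS_self hL1 hL2 e he⟩
    · simp only [if_neg hii] at he ⊢
      exact ⟨pathL_sub_Gr desc_pow e he, pathL_disj_FS_ne hii e he⟩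
  · intro a b hab e hea heb
    have key : ∀ (c : Fin lam) (g : ℕ → ℕ), g 0 = 1 →
        (e = (src, node c (g 0)) ∨ (∃ j < k, e = (node c (g j), node c (g (j+1)))) ∨
          e = (node c (g k), yv y)) →
        (e.1 = src ∧ e.2 = node c 1) ∨ ∃ v, e.1 = node c v := by
      intro c g hg0 h
      rcases h with rfl | ⟨j, hj, rfl⟩ | rfl
      · exact Or.inl ⟨rfl, by rw [hg0]⟩
      · exact Or.inr ⟨g j, rfl⟩
      · exact Or.inr ⟨g k, rfl⟩
    rw [mem_pathL] at hea heb
    have h0 : ∀ i' : Fin lam, (fun j => if i' = i then anc k L j else 2 ^ j) 0 = 1 := by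
      intro i'
      by_cases hii : i' = i <;> simp [hii, anc_zero hL1 hL2]
    have ha := key a (fun j => if a = i then anc k L j else 2 ^ j) (h0 a) hea
    have hb := key b (fun j => if b = i then anc k L j else 2 ^ j) (h0 b) heb
    rcases ha with ⟨ha1, ha2⟩ | ⟨v, ha1⟩ <;> rcases hb with ⟨hb1, hb2⟩ | ⟨w, hb1⟩
    · exact hab (node_inj one_lt_B one_lt_B (ha2 ▸ hb2 ▸ rfl : (node a 1 : Vx lam k n) = node b 1)).1
    · exact src_ne_node (ha1 ▸ hb1)
    · exact src_ne_node (hb1 ▸ ha1)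
    · exact node_ne_of_ne hab (ha1 ▸ hb1)

lemma maxFlow_Gr_le {G' : Finset (Vx lam k n × Vx lam k n)} (hsub : G' ⊆ Gr lam k n) (t : Vx lam k n) :
    maxFlow G' src t ≤ lam := by
  refine le_trans (Stmt6.maxFlow_le_outdeg G' src t) ?_
  have hsub2 : (G'.filter fun e => e.1 = src) ⊆
      (Finset.univ : Finset (Fin lam)).image fun g => ((src : Vx lam k n), node g 1) := by
    intro e he
    rw [Finset.mem_filter] at he
    obtain ⟨g, rfl⟩ := src_edge (hsub he.1) he.2
    simp
  refine le_trans (Finset.card_le_card hsub2) (le_trans Finset.card_image_le (by simp))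

lemma maxFlow_Gr_sdiff_FS {i : Fin lam} {L : ℕ} (y : Fin n)
    (hL1 : 2 ^ k ≤ L) (hL2 : L < 2 ^ (k + 1)) :
    maxFlow (Gr lam k n \ FS lam n i L) src (yv y) = lam :=
  le_antisymm (maxFlow_Gr_le Finset.sdiff_subset _)
    (Stmt6.le_maxFlow (edp_Gr_sdiff_FS y hL1 hL2))

end Flow
section Walk

variable {lam k n : ℕ}

lemma no_edge_from_yv {e : Vx lam k n × Vx lam k n} (he : e ∈ Gr lam k n) {y : Fin n}
    (h1 : e.1 = yv y) : False := by
  rw [mem_Gr] at he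
  obtain ⟨a, b⟩ := e
  cases h1
  rcases b with _ | b
  · simp [edgeB, yv] at he
  rcases b with b | b <;> simp [edgeB, yv] at he

/-- one step of the walk: from the `j`-th ancestor we can only move to the `(j+1)`-st,
provided the endpoint has an out-edge. -/
lemma walk_step {i : Fin lam} {L : ℕ} (hL1 : 2 ^ k ≤ L) (hL2 : L < 2 ^ (k + 1))
    {e : Vx lam k n × Vx lam k n} (he : e ∈ Gr lam k n \ FS lam n i L)
    {j : ℕ} (hj : j ≤ k) (he1 : e.1 = node i (anc k L j))
    (hout : ∃ g ∈ Gr lam k n, g.1 = e.2) :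
    j < k ∧ e.2 = node i (anc k L (j + 1)) := by
  rw [Finset.mem_sdiff] at he
  obtain ⟨heG, heF⟩ := he
  rw [mem_Gr] at heG
  obtain ⟨a, b⟩ := e
  simp only at he1 hout
  subst he1
  have hancB : anc k L j < 2 ^ (k + 1) :=
    lt_of_lt_of_le (anc_ub hL2 hj) (Nat.pow_le_pow_right (by norm_num) (by omega))
  rw [node_val hancB] at heG ⊢
  rcases b with b | b
  · simp [edgeB] at heG
  rcases b with ⟨i', w⟩ | y'
  · obtain ⟨hii, h1, h2, h3⟩ := of_decide_eq_true heG
    subst hii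
    have h1' : 1 ≤ anc k L j := h1
    have h2' : anc k L j < 2 ^ k := h2
    have h3' : (w : ℕ) = 2 * anc k L j ∨ (w : ℕ) = 2 * anc k L j + 1 := h3
    have hjk : j < k := by
      by_contra hjk
      have hkj : j = k := by omega
      rw [hkj, anc_k] at h2'
      omega
    refine ⟨hjk, ?_⟩
    have hsucc := anc_succ (L := L) hjk
    have hsib := sib_cases (k := k) (L := L) (j := j)
    have hsib2 := sib_ne (L := L) hjk
    have hw : (w : ℕ) = anc k L (j + 1) ∨ (w : ℕ) = sib k L j := by omega
    rcases hw with hw | hw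
    · have hancB2 : anc k L (j + 1) < 2 ^ (k + 1) :=
        lt_of_lt_of_le (anc_ub hL2 (by omega)) (Nat.pow_le_pow_right (by norm_num) (by omega))
      have hw' : w = ⟨anc k L (j + 1), hancB2⟩ := Fin.ext hw
      rw [node_val hancB2, hw']
    · exfalso
      apply heF
      rw [mem_FS]
      refine ⟨j, hjk, ?_⟩
      have hsibB : sib k L j < 2 ^ (k + 1) :=
        lt_of_lt_of_le (sib_ub hL1 hL2 hjk) (Nat.pow_le_pow_right (by norm_num) (by omega))
      have hw' : w = ⟨sib k L j, hsibB⟩ := Fin.ext hw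
      rw [node_val hsibB, hw']
  · exfalso
    obtain ⟨g, hg, hg1⟩ := hout
    exact no_edge_from_yv hg hg1

lemma walk_inv {i : Fin lam} {L : ℕ} (hL1 : 2 ^ k ≤ L) (hL2 : L < 2 ^ (k + 1)) :
    ∀ (p : List (Vx lam k n × Vx lam k n)), (∀ e ∈ p, e ∈ Gr lam k n \ FS lam n i L) →
      List.Chain' (fun e f => e.2 = f.1) p →
      ∀ j ≤ k, p.head?.map Prod.fst = some (node i (anc k L j)) →
      ∀ e ∈ p, ∃ j', j ≤ j' ∧ j' ≤ k ∧ e.1 = node i (anc k L j') := by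
  intro p
  induction p with
  | nil => intro _ _ j hj hd e he; simp at he
  | cons e rest ih =>
    intro hG hch j hj hd e' he'
    simp only [List.head?_cons, Option.map_some, Option.some.injEq] at hd
    rcases List.mem_cons.mp he' with rfl | he'
    · exact ⟨j, le_rfl, hj, hd⟩
    · cases rest with
      | nil => simp at he'
      | cons f rest' =>
        obtain ⟨hef, hch'⟩ := List.isChain_cons_cons.mp hch
        have hfG : f ∈ Gr lam k n := by
          have := hG f (by simp)
          exact (Finset.mem_sdiff.mp this).1
        have hstep := walk_step hL1 hL2 (hG e (by simp)) hj hd ⟨f, hfG, hef.symm⟩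
        obtain ⟨hjk, he2⟩ := hstep
        have := ih (fun e h => hG e (List.mem_cons_of_mem _ h)) hch' (j + 1) (by omega)
          (by simp [← hef, he2]) e' he'
        obtain ⟨j', h1, h2, h3⟩ := this
        exact ⟨j', by omega, h2, h3⟩

end Walk
section Main

variable {lam k n : ℕ}

lemma leaf_mem {H : Finset (Vx lam k n × Vx lam k n)}
    (hH : IsFTBFP (Gr lam k n) H src lam k) (i : Fin lam) {L : ℕ}
    (hL1 : 2 ^ k ≤ L) (hL2 : L < 2 ^ (k + 1)) (y : Fin n) :
    (node i L, yv y) ∈ H := by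
  classical
  set F := FS lam n (k := k) i L with hF
  have hMF : maxFlow (Gr lam k n \ F) src (yv y) = lam := maxFlow_Gr_sdiff_FS y hL1 hL2
  have h := (hH.2 F FS_card (yv y)).1 (le_of_eq hMF)
  rw [hMF] at h
  have hedp : EDP (H \ F) src (yv y) lam := by
    have h2 := Stmt6.edp_maxFlow (H \ F) src (yv y)
    rwa [h] at h2
  obtain ⟨ps, hps, hdis⟩ := hedp
  have hHG : H \ F ⊆ Gr lam k n \ F :=
    Finset.sdiff_subset_sdiff hH.1 (Finset.Subset.refl _)
  have hhead : ∀ a : Fin lam, ∃ g : Fin lam,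
      (ps a).head (hps a).1 = ((src : Vx lam k n), node g 1) := by
    intro a
    obtain ⟨hn, hGm, -, hh, -⟩ := hps a
    have hm := List.head_mem hn
    have hin : (ps a).head hn ∈ Gr lam k n :=
      (Finset.mem_sdiff.mp (hHG (hGm _ hm))).1
    rw [List.head?_eq_head hn] at hh
    have h1 : ((ps a).head hn).1 = src := by simpa using hh
    obtain ⟨g, hg⟩ := src_edge hin h1
    exact ⟨g, hg⟩
  choose φ hφ using hhead
  have hinj : Function.Injective φ := by
    intro a b hab
    by_contra hne
    apply hdis a b hne _ (List.head_mem (hps a).1)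
    rw [hφ a, hab, ← hφ b]
    exact List.head_mem _
  obtain ⟨i₀, hi₀⟩ := Finite.injective_iff_surjective.mp hinj i
  obtain ⟨hn, hGm, hch, hh, hl⟩ := hps i₀
  have hhead₀ : (ps i₀).head hn = ((src : Vx lam k n), node i 1) := by
    rw [hφ i₀, hi₀]
  cases hp : ps i₀ with
  | nil => exact absurd hp hn
  | cons e₀ q =>
    have hhead2 : (ps i₀).head? = some ((src : Vx lam k n), node i 1) := by
      rw [List.head?_eq_head hn, hhead₀]
    rw [hp] at hGm hch hl hhead2
    simp only [List.head?_cons, Option.some.injEq] at hhead2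
    subst hhead2
    have hq : q ≠ [] := by
      intro hq0
      subst hq0
      simp only [List.getLast?_singleton, Option.map_some] at hl
      exact yv_ne_node (Option.some.inj hl).symm
    obtain ⟨hrel, hchq⟩ := List.isChain_cons.mp hch
    have hqG : ∀ e ∈ q, e ∈ Gr lam k n \ F :=
      fun e he => hHG (hGm e (List.mem_cons_of_mem _ he))
    have hqh : q.head?.map Prod.fst = some (node i (anc k L 0)) := by
      cases q with
      | nil => exact absurd rfl hq
      | cons f q' =>
        have := hrel f (by simp)
        simp only [List.head?_cons, Option.map_some, Option.some.injEq]
        rw [← this, anc_zero hL1 hL2]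
    have hinv := walk_inv hL1 hL2 q hqG hchq 0 (Nat.zero_le _) hqh
    have hlast : q.getLast hq ∈ q := List.getLast_mem hq
    obtain ⟨j', -, hj'k, hfst⟩ := hinv _ hlast
    have hsnd : (q.getLast hq).2 = yv y := by
      rw [show ((src : Vx lam k n), node i 1) :: q = [((src : Vx lam k n), node i 1)] ++ q
          from rfl, List.getLast?_append, List.getLast?_eq_getLast hq, Option.some_or] at hl
      simpa using hl
    have hlGr : q.getLast hq ∈ Gr lam k n := (Finset.mem_sdiff.mp (hqG _ hlast)).1
    have hancB : anc k L j' < 2 ^ (k + 1) :=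
      lt_of_lt_of_le (anc_ub hL2 hj'k) (Nat.pow_le_pow_right (by norm_num) (by omega))
    have hge : 2 ^ k ≤ anc k L j' := by
      rw [mem_Gr, hfst, hsnd, node_val hancB] at hlGr
      exact of_decide_eq_true hlGr
    have hj'e : j' = k := by
      have h2 := anc_ub (L := L) hL2 hj'k
      have h3 : (2:ℕ) ^ k < 2 ^ (j' + 1) := by omega
      have h4 : k < j' + 1 := (Nat.pow_lt_pow_iff_right (by norm_num)).mp h3
      omega
    have : q.getLast hq = (node i L, yv y) :=
      Prod.ext (by rw [hfst, hj'e, anc_k]) hsnd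
    rw [← this]
    exact (Finset.mem_sdiff.mp (hGm _ (List.mem_cons_of_mem _ hlast))).1

end Main

/-- for all `lam, k, n ≥ 1` with `n ≥ 3·lam·2^k` there is a digraph on
`O(n)` (here: at most `3n`) vertices with a source `s` such that every
`(lam,k)`-FT-BFP of it has at least `2^k·lam·n/3` edges. -/
theorem stmt_6 (lam k n : ℕ) (hlam : 1 ≤ lam) (hk : 1 ≤ k)
    (hn : 3 * lam * 2 ^ k ≤ n) :
    ∃ (V : Type) (instF : Fintype V) (instD : DecidableEq V)
      (G : Finset (V × V)) (s : V),
      @Fintype.card V instF ≤ 3 * n ∧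
      ∀ H : Finset (V × V), @IsFTBFP V instD G H s lam k →
        2 ^ k * lam * n ≤ 3 * H.card := by
  refine ⟨Vx lam k n, inferInstance, inferInstance, Gr lam k n, src, ?_, ?_⟩
  · have hcard : Fintype.card (Vx lam k n) = 1 + (lam * 2 ^ (k + 1) + n) := by simp
    rw [hcard]
    have h1 : 1 * 1 ≤ lam * 2 ^ k := Nat.mul_le_mul hlam Nat.one_le_two_pow
    have h2 : lam * 2 ^ (k + 1) = 2 * (lam * 2 ^ k) := by rw [pow_succ]; ring
    have hn' : 3 * (lam * 2 ^ k) ≤ n := by rw [← mul_assoc]; exact hn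
    omega
  · intro H hH
    classical
    set φc : Fin lam × Fin (2 ^ k) × Fin n → Vx lam k n × Vx lam k n :=
      fun x => ((node x.1 (2 ^ k + (x.2.1 : ℕ)) : Vx lam k n), yv x.2.2) with hφc
    have hb1 : ∀ a : Fin (2 ^ k), 2 ^ k ≤ 2 ^ k + (a : ℕ) := fun a => Nat.le_add_right _ _
    have hb2 : ∀ a : Fin (2 ^ k), 2 ^ k + (a : ℕ) < 2 ^ (k + 1) := by
      intro a
      have := a.isLt
      rw [pow_succ]
      omega
    have hsub : ∀ x : Fin lam × Fin (2 ^ k) × Fin n, φc x ∈ H :=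
      fun x => leaf_mem hH x.1 (hb1 x.2.1) (hb2 x.2.1) x.2.2
    have hinj : Function.Injective φc := by
      intro x x' hx
      rw [hφc, Prod.mk.injEq] at hx
      obtain ⟨h1, h2⟩ := hx
      have h3 := node_inj (hb2 x.2.1) (hb2 x'.2.1) h1
      have h4 : x.2.2 = x'.2.2 := by
        simpa [yv] using h2
      have h5 : x.2.1 = x'.2.1 := by
        have := h3.2
        exact Fin.ext (by omega)
      exact Prod.ext h3.1 (Prod.ext h5 h4)
    have hSH : (Finset.univ : Finset (Fin lam × Fin (2 ^ k) × Fin n)).image φc ⊆ H := by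
      intro e he
      obtain ⟨x, -, rfl⟩ := Finset.mem_image.mp he
      exact hsub x
    have hcount := Finset.card_le_card hSH
    rw [Finset.card_image_of_injective _ hinj] at hcount
    simp only [Finset.card_univ, Fintype.card_prod, Fintype.card_fin] at hcount
    have heq : 2 ^ k * lam * n = lam * (2 ^ k * n) := by ring
    omega
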